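/- Let P be a 1-differential poset, let k and n be positive integers, and let d_{p_n} denote the last Smith entry of the integer matrix DU_n + kI. Then (n−1)!_{1,k} · (n+1+k) divides d_{p_n}. -/

import Mathlib

open Matrix

variable {α : Type*}

/-- The generalized factorial `ℓ!_{r,k} = (rℓ+k)(r(ℓ-1)+k)⋯(r·1+k)`. -/
def genFac (r k ℓ : ℕ) : ℕ := ∏ i ∈ Finset.range ℓ, (r * (i + 1) + k)

open Classical in
/-- The matrix of the up map `U_n : ℤP_n → ℤP_{n+1}`. -/
noncomputable def upMatZ [PartialOrder α] (rk : α → ℕ) (n : ℕ) :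
    Matrix {x : α // rk x = n + 1} {x : α // rk x = n} ℤ :=
  Matrix.of fun z x => if x.1 ⋖ z.1 then 1 else 0

/-- The matrix of `DU_n := D_{n+1} U_n` over `ℤ`. -/
noncomputable def duMatZ [PartialOrder α] (rk : α → ℕ)
    [∀ n : ℕ, Fintype {x : α // rk x = n}] (n : ℕ) :
    Matrix {x : α // rk x = n} {x : α // rk x = n} ℤ :=
  (upMatZ rk n)ᵀ * upMatZ rk n

section DPAux

open Classical

set_option linter.unusedSectionVars false

variable [PartialOrder α] [OrderBot α] (rk : α → ℕ) [∀ n : ℕ, Fintype {x : α // rk x = n}]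

/-- delta vector -/
noncomputable def dvec (c : α) : α → ℤ := fun t => if t = c then 1 else 0

/-- global up map -/
noncomputable def UpF (v : α → ℤ) : α → ℤ :=
  fun x => ∑ w : {w : α // rk w = rk x - 1}, if w.1 ⋖ x then v w.1 else 0

/-- global down map -/
noncomputable def DnF (v : α → ℤ) : α → ℤ :=
  fun x => ∑ z : {z : α // rk z = rk x + 1}, if x ⋖ z.1 then v z.1 else 0

/-- restriction to a rank -/
def restr (r : ℕ) (v : α → ℤ) : {x : α // rk x = r} → ℤ := fun x => v x.1

lemma sum_indicator_ncard (r : ℕ) (S : Set α) (hS : ∀ z ∈ S, rk z = r) :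
    (∑ z : {x : α // rk x = r}, if z.1 ∈ S then (1 : ℤ) else 0) = S.ncard := by
  rw [Finset.sum_boole]
  congr 1
  have e1 : S ≃ {z : {x : α // rk x = r} // z.1 ∈ S} :=
    { toFun := fun s => ⟨⟨s.1, hS s.1 s.2⟩, s.2⟩
      invFun := fun z => ⟨z.1.1, z.2⟩
      left_inv := fun s => rfl
      right_inv := fun z => rfl }
  rw [← Nat.card_coe_set_eq, Nat.card_congr e1, Nat.card_eq_fintype_card,
    Fintype.card_subtype]

lemma keyMat (hgrade : ∀ x y : α, x ⋖ y → rk y = rk x + 1)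
    (hD1 : ∀ x : α, {z : α | x ⋖ z}.ncard = {y : α | y ⋖ x}.ncard + 1)
    (hD2 : ∀ x y : α, x ≠ y →
      {z : α | z ⋖ x ∧ z ⋖ y}.ncard = {z : α | x ⋖ z ∧ y ⋖ z}.ncard)
    (r : ℕ) :
    (upMatZ rk (r + 1))ᵀ * upMatZ rk (r + 1) = upMatZ rk r * (upMatZ rk r)ᵀ + 1 := by
  ext x y
  have hl : ((upMatZ rk (r + 1))ᵀ * upMatZ rk (r + 1)) x y
      = ({z : α | x.1 ⋖ z ∧ y.1 ⋖ z}.ncard : ℤ) := by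
    rw [← sum_indicator_ncard rk (r + 2) _
      (fun z hz => by rw [hgrade x.1 z hz.1, x.2])]
    simp only [Matrix.mul_apply, Matrix.transpose_apply, upMatZ, Matrix.of_apply]
    refine Finset.sum_congr rfl fun z _ => ?_
    by_cases h1 : x.1 ⋖ z.1 <;> by_cases h2 : y.1 ⋖ z.1 <;>
      simp [h1, h2, Set.mem_setOf_eq]
  have hr : (upMatZ rk r * (upMatZ rk r)ᵀ) x y
      = ({z : α | z ⋖ x.1 ∧ z ⋖ y.1}.ncard : ℤ) := by
    rw [← sum_indicator_ncard rk r _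
      (fun z hz => by have := hgrade z x.1 hz.1; rw [x.2] at this; omega)]
    simp only [Matrix.mul_apply, Matrix.transpose_apply, upMatZ, Matrix.of_apply]
    refine Finset.sum_congr rfl fun z _ => ?_
    by_cases h1 : z.1 ⋖ x.1 <;> by_cases h2 : z.1 ⋖ y.1 <;>
      simp [h1, h2, Set.mem_setOf_eq]
  rw [Matrix.add_apply, hl, hr]
  by_cases hxy : x = y
  · subst hxy
    rw [Matrix.one_apply_eq]
    have := hD1 x.1
    simp only [and_self]
    rw [this]
    push_cast; ring
  · rw [Matrix.one_apply_ne hxy, hD2 x.1 y.1 (fun h => hxy (Subtype.ext h))]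
    ring

lemma upApply (hgrade : ∀ x y : α, x ⋖ y → rk y = rk x + 1)
    (r : ℕ) (v : α → ℤ) (z : {x : α // rk x = r + 1}) :
    UpF rk v z.1 = (upMatZ rk r *ᵥ restr rk r v) z := by
  unfold UpF restr
  simp only [Matrix.mulVec, dotProduct, upMatZ, Matrix.of_apply]
  refine Fintype.sum_equiv (Equiv.subtypeEquivRight (q := fun w => rk w = r)
    (fun w => by rw [z.2]; simp)) _ _ (fun w => ?_)
  simp only [Equiv.subtypeEquivRight_apply]
  by_cases h : w.1 ⋖ z.1 <;> simp [h]

lemma dnApply (hgrade : ∀ x y : α, x ⋖ y → rk y = rk x + 1)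
    (r : ℕ) (v : α → ℤ) (x : {x : α // rk x = r}) :
    DnF rk v x.1 = ((upMatZ rk r)ᵀ *ᵥ restr rk (r + 1) v) x := by
  unfold DnF restr
  simp only [Matrix.mulVec, dotProduct, upMatZ, Matrix.transpose_apply,
    Matrix.of_apply]
  refine Fintype.sum_equiv (Equiv.subtypeEquivRight (q := fun w => rk w = r + 1)
    (fun w => by rw [x.2])) _ _ (fun w => ?_)
  simp only [Equiv.subtypeEquivRight_apply]
  by_cases h : x.1 ⋖ w.1 <;> simp [h]

lemma restr_up (hgrade : ∀ x y : α, x ⋖ y → rk y = rk x + 1) (r : ℕ) (v : α → ℤ) :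
    restr rk (r + 1) (UpF rk v) = upMatZ rk r *ᵥ restr rk r v :=
  funext fun z => upApply rk hgrade r v z

lemma restr_dn (hgrade : ∀ x y : α, x ⋖ y → rk y = rk x + 1) (r : ℕ) (v : α → ℤ) :
    restr rk r (DnF rk v) = (upMatZ rk r)ᵀ *ᵥ restr rk (r + 1) v :=
  funext fun x => dnApply rk hgrade r v x

set_option linter.unusedVariables false

lemma rank_zero_bot (hbot : rk ⊥ = 0)
    (hgrade : ∀ x y : α, x ⋖ y → rk y = rk x + 1)
    (hdown : ∀ x : α, x ≠ ⊥ → ∃ y : α, y ⋖ x) :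
    ∀ z : α, rk z = 0 → z = ⊥ := by
  intro z hz
  by_contra h
  obtain ⟨y, hy⟩ := hdown z h
  have := hgrade y z hy
  omega

lemma cov_finite (hgrade : ∀ x y : α, x ⋖ y → rk y = rk x + 1) (x : α) :
    {z : α | x ⋖ z}.Finite := by
  apply Set.Finite.subset (Set.finite_range
    (fun w : {w : α // rk w = rk x + 1} => w.1))
  intro z hz
  exact ⟨⟨z, hgrade x z hz⟩, rfl⟩

lemma cvd_finite (hgrade : ∀ x y : α, x ⋖ y → rk y = rk x + 1) (x : α) :
    {w : α | w ⋖ x}.Finite := by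
  apply Set.Finite.subset (Set.finite_range
    (fun w : {w : α // rk w = rk x - 1} => w.1))
  intro z hz
  refine ⟨⟨z, ?_⟩, rfl⟩
  have := hgrade z x hz
  omega

lemma G1 (hbot : rk ⊥ = 0)
    (hgrade : ∀ x y : α, x ⋖ y → rk y = rk x + 1)
    (hdown : ∀ x : α, x ≠ ⊥ → ∃ y : α, y ⋖ x)
    (hD1 : ∀ x : α, {z : α | x ⋖ z}.ncard = {y : α | y ⋖ x}.ncard + 1)
    (hD2 : ∀ x y : α, x ≠ y →
      {z : α | z ⋖ x ∧ z ⋖ y}.ncard = {z : α | x ⋖ z ∧ y ⋖ z}.ncard)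
    (v : α → ℤ) (x : α) :
    DnF rk (UpF rk v) x = UpF rk (DnF rk v) x + v x := by
  rcases hr : rk x with _ | r
  · -- rank 0 : x = ⊥
    have hxbot : x = ⊥ := rank_zero_bot rk hbot hgrade hdown x hr
    subst hxbot
    -- covers of ⊥ : ncard 1
    have hcvdbot : {y : α | y ⋖ (⊥ : α)} = ∅ := by
      ext y; simp only [Set.mem_setOf_eq, Set.mem_empty_iff_false, iff_false]
      exact fun h => absurd h.lt (not_lt_bot)
    have h1 : {z : α | (⊥ : α) ⋖ z}.ncard = 1 := by
      rw [hD1 ⊥, hcvdbot]; simp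
    obtain ⟨a, ha⟩ := Set.ncard_eq_one.mp h1
    have hba : (⊥ : α) ⋖ a := by
      have : a ∈ {z : α | (⊥ : α) ⋖ z} := by rw [ha]; rfl
      exact this
    have hrka : rk a = rk (⊥ : α) + 1 := hgrade ⊥ a hba
    -- DnF (UpF v) ⊥ = UpF v a
    have hL : DnF rk (UpF rk v) ⊥ = UpF rk v a := by
      unfold DnF
      rw [show (∑ z : {z : α // rk z = rk (⊥ : α) + 1},
          if (⊥ : α) ⋖ z.1 then UpF rk v z.1 else 0)
        = ∑ z : {z : α // rk z = rk (⊥ : α) + 1},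
          if z = ⟨a, hrka⟩ then UpF rk v z.1 else 0 from
        Finset.sum_congr rfl fun z _ => by
          congr 1
          have : ((⊥ : α) ⋖ z.1) ↔ z.1 = a := by
            constructor
            · intro h; have : z.1 ∈ {z : α | (⊥ : α) ⋖ z} := h
              rw [ha] at this; exact this
            · intro h; rw [h]; exact hba
          rw [eq_iff_iff, this]
          exact ⟨fun h => Subtype.ext h, fun h => congrArg Subtype.val h⟩]
      rw [Fintype.sum_ite_eq' (⟨a, hrka⟩ : {z : α // rk z = rk (⊥ : α) + 1})]
    -- UpF v a = v ⊥
    have hcvda : ∀ u : α, u ⋖ a → u = ⊥ := by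
      intro u hu
      have := hgrade u a hu
      have : rk u = 0 := by omega
      exact rank_zero_bot rk hbot hgrade hdown u this
    have hbrk : rk (⊥ : α) = rk a - 1 := by omega
    have hUa : UpF rk v a = v ⊥ := by
      unfold UpF
      rw [show (∑ w : {w : α // rk w = rk a - 1},
          if w.1 ⋖ a then v w.1 else 0)
        = ∑ w : {w : α // rk w = rk a - 1},
          if w = ⟨⊥, hbrk⟩ then v w.1 else 0 from
        Finset.sum_congr rfl fun w _ => by
          congr 1
          have : (w.1 ⋖ a) ↔ w.1 = (⊥ : α) := by
            constructor
            · exact hcvda w.1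
            · intro h; rw [h]; exact hba
          rw [eq_iff_iff, this]
          exact ⟨fun h => Subtype.ext h, fun h => congrArg Subtype.val h⟩]
      rw [Fintype.sum_ite_eq' (⟨⊥, hbrk⟩ : {w : α // rk w = rk a - 1})]
    -- UpF (DnF v) ⊥ = 0
    have hR : UpF rk (DnF rk v) ⊥ = 0 := by
      unfold UpF
      refine Finset.sum_eq_zero fun w _ => ?_
      rw [if_neg (fun h => absurd h.lt (not_lt_bot))]
    rw [hL, hUa, hR, zero_add]
  · -- rank r + 1 : via matrices
    have hx : x = (⟨x, hr⟩ : {t : α // rk t = r + 1}).1 := rfl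
    rw [hx, dnApply rk hgrade (r+1) (UpF rk v) ⟨x, hr⟩,
      restr_up rk hgrade (r+1) v, Matrix.mulVec_mulVec,
      keyMat rk hgrade hD1 hD2 r, Matrix.add_mulVec, Matrix.one_mulVec,
      ← Matrix.mulVec_mulVec, ← restr_dn rk hgrade r v,
      ← restr_up rk hgrade r (DnF rk v)]
    rfl

lemma UpF_add (u w : α → ℤ) :
    UpF rk (fun t => u t + w t) = fun t => UpF rk u t + UpF rk w t := by
  funext x
  unfold UpF
  rw [← Finset.sum_add_distrib]
  exact Finset.sum_congr rfl fun z _ => by split <;> simp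

lemma UpF_iter_add (j : ℕ) (u w : α → ℤ) :
    (UpF rk)^[j] (fun t => u t + w t) = fun t => (UpF rk)^[j] u t + (UpF rk)^[j] w t := by
  induction j generalizing u w with
  | zero => rfl
  | succ j ih =>
    rw [Function.iterate_succ_apply, Function.iterate_succ_apply,
      Function.iterate_succ_apply, UpF_add]
    exact ih _ _

lemma G2 (hbot : rk ⊥ = 0)
    (hgrade : ∀ x y : α, x ⋖ y → rk y = rk x + 1)
    (hdown : ∀ x : α, x ≠ ⊥ → ∃ y : α, y ⋖ x)
    (hD1 : ∀ x : α, {z : α | x ⋖ z}.ncard = {y : α | y ⋖ x}.ncard + 1)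
    (hD2 : ∀ x y : α, x ≠ y →
      {z : α | z ⋖ x ∧ z ⋖ y}.ncard = {z : α | x ⋖ z ∧ y ⋖ z}.ncard) :
    ∀ (i : ℕ) (v : α → ℤ) (x : α),
      DnF rk ((UpF rk)^[i+1] v) x
        = (UpF rk)^[i+1] (DnF rk v) x + ((i : ℤ) + 1) * (UpF rk)^[i] v x := by
  intro i
  induction i with
  | zero =>
    intro v x
    simp only [zero_add, Nat.cast_zero, Function.iterate_one, Function.iterate_zero, id_eq]
    rw [G1 rk hbot hgrade hdown hD1 hD2 v x]
    ring
  | succ i ih =>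
    intro v x
    rw [show (UpF rk)^[i+1+1] v = (UpF rk)^[i+1] (UpF rk v) from
      Function.iterate_succ_apply _ _ _, ih (UpF rk v) x]
    have hg1 : DnF rk (UpF rk v) = fun t => UpF rk (DnF rk v) t + v t :=
      funext fun t => G1 rk hbot hgrade hdown hD1 hD2 v t
    rw [hg1, UpF_iter_add]
    rw [show (UpF rk)^[i+1] (UpF rk (DnF rk v)) = (UpF rk)^[i+1+1] (DnF rk v) from
      (Function.iterate_succ_apply _ _ _).symm,
      show (UpF rk)^[i+1] v = (UpF rk)^[i] (UpF rk v) from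
      Function.iterate_succ_apply _ _ _]
    push_cast
    ring

/-- `z` privately covers `x`: `z` covers `x` and nothing else. -/
def Priv (z x : α) : Prop := x ⋖ z ∧ ∀ u : α, u ⋖ z → u = x

lemma dn_dvec_priv (hgrade : ∀ x y : α, x ⋖ y → rk y = rk x + 1)
    (z x : α) (h : Priv z x) :
    DnF rk (dvec z) = dvec x := by
  funext t
  unfold DnF dvec
  by_cases htz : t ⋖ z
  · have hrkz : rk z = rk t + 1 := hgrade t z htz
    have htx : t = x := h.2 t htz
    rw [if_pos htx]
    rw [show (∑ w : {w : α // rk w = rk t + 1},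
        if t ⋖ w.1 then (if w.1 = z then (1:ℤ) else 0) else 0)
      = ∑ w : {w : α // rk w = rk t + 1},
        if w = ⟨z, hrkz⟩ then (1:ℤ) else 0 from
      Finset.sum_congr rfl fun w _ => by
        by_cases hw : w = (⟨z, hrkz⟩ : {w : α // rk w = rk t + 1})
        · rw [if_pos hw, hw]
          simp [htz]
        · have hwz : w.1 ≠ z := fun hh => hw (Subtype.ext hh)
          rw [if_neg hw, if_neg hwz]
          simp]
    rw [Fintype.sum_ite_eq' (⟨z, hrkz⟩ : {w : α // rk w = rk t + 1})]
  · have htx : t ≠ x := fun hh => htz (by rw [hh]; exact h.1)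
    rw [if_neg htx]
    refine Finset.sum_eq_zero fun w _ => ?_
    by_cases hw : w.1 = z
    · have : ¬ t ⋖ w.1 := by rw [hw]; exact htz
      rw [if_neg this]
    · rw [if_neg hw]
      simp

lemma up_apply_priv (hgrade : ∀ x y : α, x ⋖ y → rk y = rk x + 1)
    (z x : α) (h : Priv z x) (v : α → ℤ) :
    UpF rk v z = v x := by
  unfold UpF
  have hrkx : rk x = rk z - 1 := by have := hgrade x z h.1; omega
  rw [show (∑ w : {w : α // rk w = rk z - 1},
      if w.1 ⋖ z then v w.1 else 0)
    = ∑ w : {w : α // rk w = rk z - 1},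
      if w = ⟨x, hrkx⟩ then v w.1 else 0 from
    Finset.sum_congr rfl fun w _ => by
      congr 1
      rw [eq_iff_iff]
      constructor
      · intro hw; exact Subtype.ext (h.2 w.1 hw)
      · intro hw; rw [hw]; exact h.1]
  rw [Fintype.sum_ite_eq' (⟨x, hrkx⟩ : {w : α // rk w = rk z - 1})]

lemma up_dvec_unique (hgrade : ∀ x y : α, x ⋖ y → rk y = rk x + 1)
    (x z : α) (hxz : x ⋖ z) (hcov : ∀ t, x ⋖ t → t = z) :
    UpF rk (dvec x) = dvec z := by
  funext t
  unfold UpF dvec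
  by_cases ht : t = z
  · subst ht
    have hrkx : rk x = rk t - 1 := by have := hgrade x t hxz; omega
    rw [if_pos rfl]
    rw [show (∑ w : {w : α // rk w = rk t - 1},
        if w.1 ⋖ t then (if w.1 = x then (1:ℤ) else 0) else 0)
      = ∑ w : {w : α // rk w = rk t - 1},
        if w = ⟨x, hrkx⟩ then (1:ℤ) else 0 from
      Finset.sum_congr rfl fun w _ => by
        by_cases hw : w = (⟨x, hrkx⟩ : {w : α // rk w = rk t - 1})
        · rw [if_pos hw, hw]
          simp [hxz]
        · have hwx : w.1 ≠ x := fun hh => hw (Subtype.ext hh)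
          rw [if_neg hw, if_neg hwx]
          simp]
    rw [Fintype.sum_ite_eq' (⟨x, hrkx⟩ : {w : α // rk w = rk t - 1})]
  · rw [if_neg ht]
    refine Finset.sum_eq_zero fun w _ => ?_
    by_cases hw : w.1 = x
    · have : ¬ w.1 ⋖ t := by
        rw [hw]; exact fun hc => ht (hcov t hc)
      rw [if_neg this]
    · rw [if_neg hw]
      simp

lemma iter_up_eval (hgrade : ∀ x y : α, x ⋖ y → rk y = rk x + 1)
    (X : ℕ → α) (hX : ∀ j, Priv (X (j+1)) (X j)) (m : ℕ) (v : α → ℤ) :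
    ∀ i : ℕ, (UpF rk)^[i] v (X (m+i)) = v (X m) := by
  intro i
  induction i with
  | zero => rfl
  | succ i ih =>
    rw [Function.iterate_succ_apply',
      show X (m + (i+1)) = X ((m+i)+1) from rfl,
      up_apply_priv rk hgrade _ _ (hX (m+i))]
    exact ih

lemma priv_step (hgrade : ∀ x y : α, x ⋖ y → rk y = rk x + 1)
    (hD1 : ∀ x : α, {z : α | x ⋖ z}.ncard = {y : α | y ⋖ x}.ncard + 1)
    (hD2 : ∀ x y : α, x ≠ y →
      {z : α | z ⋖ x ∧ z ⋖ y}.ncard = {z : α | x ⋖ z ∧ y ⋖ z}.ncard)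
    (x w : α) (hxw : Priv x w) (hw : {c : α | c ⋖ w}.ncard ≤ 1) :
    ∃ z, Priv z x := by
  have hcvdx : {c : α | c ⋖ x} = {w} :=
    Set.eq_singleton_iff_unique_mem.mpr ⟨hxw.1, fun c hc => hxw.2 c hc⟩
  have h2 : {z : α | x ⋖ z}.ncard = 2 := by
    rw [hD1 x, hcvdx, Set.ncard_singleton]
  obtain ⟨v₁, v₂, hv12, hcov⟩ := Set.ncard_eq_two.mp h2
  have hv₁x : x ⋖ v₁ := by
    have : v₁ ∈ {z : α | x ⋖ z} := by rw [hcov]; left; rfl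
    exact this
  have hv₂x : x ⋖ v₂ := by
    have : v₂ ∈ {z : α | x ⋖ z} := by rw [hcov]; right; rfl
    exact this
  by_contra hno
  push_neg at hno
  have keyu : ∀ v, x ⋖ v → ∃ u, u ≠ x ∧ u ⋖ v ∧ w ⋖ u := by
    intro v hv
    have hex : ∃ u, u ⋖ v ∧ u ≠ x := by
      by_contra hh
      push_neg at hh
      exact hno v ⟨hv, fun u hu => hh u hu⟩
    obtain ⟨u, huv, hux⟩ := hex
    have hfin1 : {z : α | x ⋖ z ∧ u ⋖ z}.Finite :=
      (cov_finite rk hgrade x).subset fun z hz => hz.1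
    have hne : {z : α | x ⋖ z ∧ u ⋖ z}.ncard ≠ 0 := by
      have : 0 < {z : α | x ⋖ z ∧ u ⋖ z}.ncard :=
        (Set.ncard_pos hfin1).mpr ⟨v, hv, huv⟩
      omega
    have hne2 : {z : α | z ⋖ x ∧ z ⋖ u}.ncard ≠ 0 := by
      rw [hD2 x u (Ne.symm hux)]; exact hne
    obtain ⟨c, hc⟩ := Set.nonempty_of_ncard_ne_zero hne2
    have hcw : c = w := hxw.2 c hc.1
    exact ⟨u, hux, huv, hcw ▸ hc.2⟩
  obtain ⟨u₁, hu₁x, hu₁v, hwu₁⟩ := keyu v₁ hv₁x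
  obtain ⟨u₂, hu₂x, hu₂v, hwu₂⟩ := keyu v₂ hv₂x
  have hcovw : {z : α | w ⋖ z}.ncard ≤ 2 := by
    rw [hD1 w]; omega
  by_cases h12 : u₁ = u₂
  · -- v₁, v₂ are two common covers of x and u₁
    subst h12
    have hfinc : {z : α | x ⋖ z ∧ u₁ ⋖ z}.Finite :=
      (cov_finite rk hgrade x).subset fun z hz => hz.1
    have h2le : 1 < {z : α | x ⋖ z ∧ u₁ ⋖ z}.ncard :=
      (Set.one_lt_ncard hfinc).mpr ⟨v₁, ⟨hv₁x, hu₁v⟩, v₂, ⟨hv₂x, hu₂v⟩, (Ne.symm hv12).symm⟩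
    have hsub : {z : α | z ⋖ x ∧ z ⋖ u₁} ⊆ {w} := by
      intro c hc
      exact hxw.2 c hc.1
    have hle1 : {z : α | z ⋖ x ∧ z ⋖ u₁}.ncard ≤ 1 := by
      have := Set.ncard_le_ncard hsub (Set.finite_singleton w)
      rwa [Set.ncard_singleton] at this
    rw [hD2 x u₁ (Ne.symm hu₁x)] at hle1
    omega
  · -- x, u₁, u₂ are three distinct covers of w
    have hx12 : x ∉ ({u₁, u₂} : Set α) := by
      intro hh
      rcases hh with hh | hh
      · exact hu₁x hh.symm
      · exact hu₂x hh.symm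
    have hu12 : u₁ ∉ ({u₂} : Set α) := h12
    have h3 : ({x, u₁, u₂} : Set α).ncard = 3 := by
      rw [Set.ncard_insert_of_notMem hx12 (by
          exact (Set.finite_singleton u₂).insert u₁),
        Set.ncard_insert_of_notMem hu12 (Set.finite_singleton u₂),
        Set.ncard_singleton]
    have hsub : ({x, u₁, u₂} : Set α) ⊆ {z : α | w ⋖ z} := by
      intro c hc
      rcases hc with hh | hh | hh
      · rw [hh]; exact hxw.1
      · rw [hh]; exact hwu₁
      · rw [hh]; exact hwu₂
    have := Set.ncard_le_ncard hsub (cov_finite rk hgrade w)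
    omega

lemma chains_exist (hbot : rk ⊥ = 0)
    (hgrade : ∀ x y : α, x ⋖ y → rk y = rk x + 1)
    (hdown : ∀ x : α, x ≠ ⊥ → ∃ y : α, y ⋖ x)
    (hD1 : ∀ x : α, {z : α | x ⋖ z}.ncard = {y : α | y ⋖ x}.ncard + 1)
    (hD2 : ∀ x y : α, x ≠ y →
      {z : α | z ⋖ x ∧ z ⋖ y}.ncard = {z : α | x ⋖ z ∧ y ⋖ z}.ncard) :
    ∃ (X Y : ℕ → α),
      X 0 = ⊥ ∧ Y 0 = ⊥ ∧ X 1 = Y 1 ∧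
      (∀ j, rk (X j) = j) ∧ (∀ j, rk (Y j) = j) ∧
      (∀ j, Priv (X (j+1)) (X j)) ∧
      (∀ j, Priv (Y (j+1)) (Y j)) ∧
      (∀ j, 2 ≤ j → X j ≠ Y j) ∧
      (∀ t : α, (⊥ : α) ⋖ t → t = X 1) := by
  classical
  -- the unique atom
  have hcvdbot : {y : α | y ⋖ (⊥ : α)} = ∅ := by
    ext y; simp only [Set.mem_setOf_eq, Set.mem_empty_iff_false, iff_false]
    exact fun h => absurd h.lt (not_lt_bot)
  have h1 : {z : α | (⊥ : α) ⋖ z}.ncard = 1 := by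
    rw [hD1 ⊥, hcvdbot]; simp
  obtain ⟨a, ha⟩ := Set.ncard_eq_one.mp h1
  have hba : (⊥ : α) ⋖ a := by
    have : a ∈ {z : α | (⊥ : α) ⋖ z} := by rw [ha]; rfl
    exact this
  have hrka : rk a = 1 := by rw [hgrade ⊥ a hba, hbot]
  have hrk1 : ∀ u : α, rk u = 1 → u = a := by
    intro u hu
    have hune : u ≠ ⊥ := fun hh => by rw [hh, hbot] at hu; omega
    obtain ⟨y, hy⟩ := hdown u hune
    have hy0 : rk y = 0 := by have := hgrade y u hy; omega
    have : y = ⊥ := rank_zero_bot rk hbot hgrade hdown y hy0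
    subst this
    have : u ∈ {z : α | (⊥ : α) ⋖ z} := hy
    rw [ha] at this
    exact this
  have hPab : Priv a ⊥ := by
    refine ⟨hba, fun u hu => ?_⟩
    have : rk u = 0 := by have := hgrade u a hu; omega
    exact rank_zero_bot rk hbot hgrade hdown u this
  -- invariant and iteration
  set Inv : α × α → Prop := fun p => Priv p.2 p.1 ∧ {c : α | c ⋖ p.1}.ncard ≤ 1
    with hInv
  have inv_step : ∀ p : α × α, Inv p → ∃ z, Inv (p.2, z) := by
    intro p hp
    obtain ⟨z, hz⟩ := priv_step rk hgrade hD1 hD2 p.2 p.1 hp.1 hp.2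
    refine ⟨z, hz, ?_⟩
    have : {c : α | c ⋖ p.2} = {p.1} :=
      Set.eq_singleton_iff_unique_mem.mpr ⟨hp.1.1, fun c hc => hp.1.2 c hc⟩
    rw [this, Set.ncard_singleton]
  let f : {p : α × α // Inv p} → {p : α × α // Inv p} := fun q =>
    ⟨(q.1.2, Classical.choose (inv_step q.1 q.2)),
      Classical.choose_spec (inv_step q.1 q.2)⟩
  have hf1 : ∀ q, (f q).1.1 = q.1.2 := fun q => rfl
  -- chain X
  have hInvX : Inv (⊥, a) := ⟨hPab, by rw [hcvdbot]; simp⟩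
  let sX : ℕ → {p : α × α // Inv p} := fun j => f^[j] ⟨(⊥, a), hInvX⟩
  let X : ℕ → α := fun j => (sX j).1.1
  have hsX : ∀ j, sX (j+1) = f (sX j) := fun j => Function.iterate_succ_apply' f j _
  have hXsucc : ∀ j, X (j+1) = (sX j).1.2 := by
    intro j
    show (sX (j+1)).1.1 = (sX j).1.2
    rw [hsX j]
  have hXpriv : ∀ j, Priv (X (j+1)) (X j) := by
    intro j
    rw [hXsucc j]
    exact (sX j).2.1
  have hX0 : X 0 = ⊥ := rfl
  have hX1 : X 1 = a := hXsucc 0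
  have hXrk : ∀ j, rk (X j) = j := by
    intro j
    induction j with
    | zero => rw [hX0, hbot]
    | succ j ih => rw [hgrade (X j) (X (j+1)) (hXpriv j).1, ih]
  -- the second cover of a
  have h2 : {z : α | a ⋖ z}.ncard = 2 := by
    have : {c : α | c ⋖ a} = {⊥} :=
      Set.eq_singleton_iff_unique_mem.mpr ⟨hPab.1, fun c hc => hPab.2 c hc⟩
    rw [hD1 a, this, Set.ncard_singleton]
  obtain ⟨v₁, v₂, hv12, hcova⟩ := Set.ncard_eq_two.mp h2
  have hX2cov : a ⋖ X 2 := by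
    have := (hXpriv 1).1
    rwa [hX1] at this
  have hX2mem : X 2 ∈ ({v₁, v₂} : Set α) := by
    rw [← hcova]; exact hX2cov
  set z' : α := if X 2 = v₁ then v₂ else v₁ with hz'
  have hz'cov : a ⋖ z' := by
    rw [hz']
    split
    · have : v₂ ∈ {z : α | a ⋖ z} := by rw [hcova]; right; rfl
      exact this
    · have : v₁ ∈ {z : α | a ⋖ z} := by rw [hcova]; left; rfl
      exact this
  have hz'ne : z' ≠ X 2 := by
    by_cases h' : X 2 = v₁
    · rw [hz', if_pos h', h']
      exact Ne.symm hv12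
    · rw [hz', if_neg h']
      rcases hX2mem with hh | hh
      · exact absurd hh h'
      · rw [hh]; exact hv12
  have hrkz' : rk z' = 2 := by rw [hgrade a z' hz'cov, hrka]
  have hPz' : Priv z' a := by
    refine ⟨hz'cov, fun u hu => ?_⟩
    have := hgrade u z' hu
    exact hrk1 u (by omega)
  have hcvda : {c : α | c ⋖ a} = {⊥} :=
    Set.eq_singleton_iff_unique_mem.mpr ⟨hPab.1, fun c hc => hPab.2 c hc⟩
  have hInvY : Inv (a, z') := ⟨hPz', by rw [hcvda, Set.ncard_singleton]⟩
  let sY : ℕ → {p : α × α // Inv p} := fun j => f^[j] ⟨(a, z'), hInvY⟩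
  let Y : ℕ → α := fun j => Nat.rec ⊥ (fun j _ => (sY j).1.1) j
  have hY0 : Y 0 = ⊥ := rfl
  have hY1 : Y 1 = a := rfl
  have hsY : ∀ j, sY (j+1) = f (sY j) := fun j => Function.iterate_succ_apply' f j _
  have hYsucc : ∀ j, Y (j+2) = (sY j).1.2 := by
    intro j
    show (sY (j+1)).1.1 = (sY j).1.2
    rw [hsY j]
  have hYpriv : ∀ j, Priv (Y (j+1)) (Y j) := by
    intro j
    cases j with
    | zero => exact hPab
    | succ j =>
      rw [hYsucc j]
      exact (sY j).2.1
  have hY2 : Y 2 = z' := hYsucc 0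
  have hYrk : ∀ j, rk (Y j) = j := by
    intro j
    induction j with
    | zero => rw [hY0, hbot]
    | succ j ih => rw [hgrade (Y j) (Y (j+1)) (hYpriv j).1, ih]
  have hXY : ∀ j, 2 ≤ j → X j ≠ Y j := by
    intro j hj
    induction j, hj using Nat.le_induction with
    | base => rw [hY2]; exact Ne.symm hz'ne
    | succ j hj ih =>
      intro hh
      have : Y j = X j := (hXpriv j).2 (Y j) (by rw [hh]; exact (hYpriv j).1)
      exact ih this.symm
  have hcb : ∀ t : α, (⊥ : α) ⋖ t → t = X 1 := by
    intro t ht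
    have : t ∈ {z : α | (⊥ : α) ⋖ z} := ht
    rw [ha] at this
    rw [hX1]
    exact this
  exact ⟨X, Y, hX0, hY0, hX1.trans hY1.symm, hXrk, hYrk, hXpriv, hYpriv, hXY, hcb⟩

/-- pairing at rank `n` against a fixed vector -/
noncomputable def pairN (n : ℕ) (g u : α → ℤ) : ℤ :=
  ∑ x : {x : α // rk x = n}, u x.1 * g x.1

lemma pairN_comb (n : ℕ) (g u v : α → ℤ) (c : ℤ) :
    pairN rk n g (fun t => u t + c * v t) = pairN rk n g u + c * pairN rk n g v := by
  unfold pairN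
  rw [Finset.mul_sum, ← Finset.sum_add_distrib]
  exact Finset.sum_congr rfl fun x _ => by ring

lemma exists_quasi_inverse (N : ℕ) (P Q D R : Matrix (Fin (N+1)) (Fin (N+1)) ℤ)
    (hP : IsUnit P.det) (hQ : IsUnit Q.det) (hPAQ : P * R * Q = D)
    (hdiag : ∀ i j, i ≠ j → D i j = 0)
    (hdvd : ∀ i j, i ≤ j → D i i ∣ D j j) :
    ∃ B : Matrix (Fin (N+1)) (Fin (N+1)) ℤ,
      B * R = (D (Fin.last N) (Fin.last N)) • 1 ∧
      R * B = (D (Fin.last N) (Fin.last N)) • 1 := by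
  classical
  set d := D (Fin.last N) (Fin.last N) with hd
  letI : Invertible P := P.invertibleOfIsUnitDet hP
  letI : Invertible Q := Q.invertibleOfIsUnitDet hQ
  have hR : R = ⅟P * D * ⅟Q := by
    rw [← hPAQ]
    calc R = (⅟P * P) * R * (Q * ⅟Q) := by
          rw [invOf_mul_self, mul_invOf_self, Matrix.one_mul, Matrix.mul_one]
    _ = ⅟P * (P * R * Q) * ⅟Q := by noncomm_ring
  set Dstar := Matrix.diagonal (fun i => d / D i i) with hDstar
  have hDD : Dstar * D = d • 1 := by
    ext i j
    rw [hDstar, Matrix.diagonal_mul, Matrix.smul_apply]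
    by_cases h : i = j
    · subst h
      rw [Matrix.one_apply_eq, Int.ediv_mul_cancel (hdvd i (Fin.last N) (Fin.le_last i))]
      simp [hd]
    · rw [hdiag i j h, Matrix.one_apply_ne h]
      simp
  have hDD2 : D * Dstar = d • 1 := by
    ext i j
    rw [hDstar, Matrix.mul_diagonal, Matrix.smul_apply]
    by_cases h : i = j
    · subst h
      rw [Matrix.one_apply_eq, Int.mul_ediv_cancel' (hdvd i (Fin.last N) (Fin.le_last i))]
      simp [hd]
    · rw [hdiag i j h, Matrix.one_apply_ne h]
      simp
  refine ⟨Q * Dstar * P, ?_, ?_⟩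
  · rw [hR]
    calc Q * Dstar * P * (⅟P * D * ⅟Q) = Q * Dstar * (P * ⅟P) * D * ⅟Q := by noncomm_ring
    _ = Q * (Dstar * D) * ⅟Q := by rw [mul_invOf_self, Matrix.mul_one]; noncomm_ring
    _ = d • (Q * ⅟Q) := by rw [hDD, Matrix.mul_smul, Matrix.smul_mul, Matrix.mul_one]
    _ = d • 1 := by rw [mul_invOf_self]
  · rw [hR]
    calc ⅟P * D * ⅟Q * (Q * Dstar * P) = ⅟P * D * (⅟Q * Q) * Dstar * P := by noncomm_ring
    _ = ⅟P * (D * Dstar) * P := by rw [invOf_mul_self, Matrix.mul_one]; noncomm_ring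
    _ = d • (⅟P * P) := by rw [hDD2, Matrix.mul_smul, Matrix.smul_mul, Matrix.mul_one]
    _ = d • 1 := by rw [invOf_mul_self]

end DPAux

open Classical in
/-- For a `1`-differential poset and positive integers `k, n`,
`(n-1)!_{1,k} · (n+1+k)` divides the last Smith entry of `DU_n + kI`. -/
theorem genFac_mul_dvd_last_smith_entry_one_differential [PartialOrder α] [OrderBot α]
    (rk : α → ℕ) [∀ n : ℕ, Fintype {x : α // rk x = n}]
    (hbot : rk ⊥ = 0)
    (hgrade : ∀ x y : α, x ⋖ y → rk y = rk x + 1)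
    (hdown : ∀ x : α, x ≠ ⊥ → ∃ y : α, y ⋖ x)
    (hD1 : ∀ x : α, {z : α | x ⋖ z}.ncard = {y : α | y ⋖ x}.ncard + 1)
    (hD2 : ∀ x y : α, x ≠ y →
      {z : α | z ⋖ x ∧ z ⋖ y}.ncard = {z : α | x ⋖ z ∧ y ⋖ z}.ncard)
    (k n N : ℕ) (hk : 0 < k) (hn : 0 < n)
    (e : {x : α // rk x = n} ≃ Fin (N + 1))
    (P Q D : Matrix (Fin (N + 1)) (Fin (N + 1)) ℤ)
    (hP : IsUnit P.det) (hQ : IsUnit Q.det)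
    (hPAQ : P * (Matrix.reindex e e (duMatZ rk n + (k : ℤ) • 1)) * Q = D)
    (hdiag : ∀ i j : Fin (N + 1), i ≠ j → D i j = 0)
    (hnonneg : ∀ i : Fin (N + 1), 0 ≤ D i i)
    (hdvd : ∀ i j : Fin (N + 1), i ≤ j → D i i ∣ D j j) :
    ((genFac 1 k (n - 1) * (n + 1 + k) : ℕ) : ℤ) ∣ D (Fin.last N) (Fin.last N) := by
  classical
  obtain ⟨X, Y, hX0, hY0, hXY1, hXrk, hYrk, hXpriv, hYpriv, hXYne, hcovbot⟩ :=
    chains_exist rk hbot hgrade hdown hD1 hD2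
  set d : ℤ := D (Fin.last N) (Fin.last N) with hd
  set M0 : Matrix {x : α // rk x = n} {x : α // rk x = n} ℤ :=
    duMatZ rk n + (k : ℤ) • 1 with hM0def
  obtain ⟨BF, hBR, hRB⟩ :=
    exists_quasi_inverse N P Q D (Matrix.reindex e e M0) hP hQ hPAQ hdiag hdvd
  set B0 : Matrix {x : α // rk x = n} {x : α // rk x = n} ℤ :=
    BF.submatrix ⇑e ⇑e with hB0def
  have hre : (Matrix.reindex e e M0).submatrix ⇑e ⇑e = M0 := by
    rw [Matrix.reindex_apply]
    ext x y
    simp [Matrix.submatrix_apply]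
  have hM0B0 : M0 * B0 = d • 1 := by
    have h1 : (Matrix.reindex e e M0).submatrix ⇑e ⇑e * BF.submatrix ⇑e ⇑e
        = ((Matrix.reindex e e M0) * BF).submatrix ⇑e ⇑e :=
      Matrix.submatrix_mul_equiv _ _ _ e _
    rw [hre] at h1
    rw [hB0def, h1, hRB]
    ext x y
    rw [Matrix.submatrix_apply, Matrix.smul_apply, Matrix.smul_apply,
      Matrix.one_apply, Matrix.one_apply]
    simp [Equiv.apply_eq_iff_eq, hd]
  set xh : {x : α // rk x = n} := ⟨X n, hXrk n⟩ with hxh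
  set g : α → ℤ := fun t => if h : rk t = n then B0 ⟨t, h⟩ xh else 0 with hgdef
  have hrg : restr rk n g = fun x => B0 x xh := by
    funext x
    show (if h : rk x.1 = n then B0 ⟨x.1, h⟩ xh else 0) = B0 x xh
    rw [dif_pos x.2]
  have hMg : (M0 *ᵥ restr rk n g) = fun i => d * (if i = xh then 1 else 0) := by
    funext i
    rw [hrg]
    show ∑ j, M0 i j * B0 j xh = _
    rw [← Matrix.mul_apply, hM0B0]
    by_cases h : i = xh
    · subst h; simp
    · simp [Matrix.one_apply_ne h, h]
  have hM0symm : M0ᵀ = M0 := by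
    rw [hM0def, Matrix.transpose_add, Matrix.transpose_smul, Matrix.transpose_one]
    congr 1
    show (duMatZ rk n)ᵀ = duMatZ rk n
    unfold duMatZ
    rw [Matrix.transpose_mul, Matrix.transpose_transpose]
  have hsym : ∀ x y, M0 x y = M0 y x := by
    intro x y
    have h : M0 x y = M0ᵀ y x := rfl
    rw [h, hM0symm]
  have swap : ∀ a b : {x : α // rk x = n} → ℤ,
      ∑ x, (M0 *ᵥ a) x * b x = ∑ x, a x * (M0 *ᵥ b) x := by
    intro a b
    simp only [Matrix.mulVec, dotProduct]
    calc ∑ x, (∑ y, M0 x y * a y) * b x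
        = ∑ x, ∑ y, M0 x y * a y * b x := by
          exact Finset.sum_congr rfl fun x _ => Finset.sum_mul _ _ _
    _ = ∑ y, ∑ x, M0 x y * a y * b x := Finset.sum_comm
    _ = ∑ y, a y * ∑ x, M0 y x * b x := by
          refine Finset.sum_congr rfl fun y _ => ?_
          rw [Finset.mul_sum]
          exact Finset.sum_congr rfl fun x _ => by rw [hsym x y]; ring
  have HREL : ∀ u : α → ℤ,
      pairN rk n g (fun t => DnF rk (UpF rk u) t + (k:ℤ) * u t) = d * u (X n) := by
    intro u
    have hres : restr rk n (fun t => DnF rk (UpF rk u) t + (k:ℤ) * u t)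
        = M0 *ᵥ restr rk n u := by
      funext x
      show DnF rk (UpF rk u) x.1 + (k:ℤ) * u x.1 = _
      rw [dnApply rk hgrade n (UpF rk u) x, restr_up rk hgrade n u,
        Matrix.mulVec_mulVec]
      rw [hM0def, Matrix.add_mulVec, Matrix.smul_mulVec, Matrix.one_mulVec]
      show _ = (((upMatZ rk n)ᵀ * upMatZ rk n) *ᵥ restr rk n u) x + ((k:ℤ) • restr rk n u) x
      rw [Pi.smul_apply, smul_eq_mul]
      rfl
    have h1 : pairN rk n g (fun t => DnF rk (UpF rk u) t + (k:ℤ) * u t)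
        = ∑ x, (M0 *ᵥ restr rk n u) x * (restr rk n g) x := by
      unfold pairN
      rw [← hres]
      rfl
    rw [h1, swap, hMg]
    have : ∀ x : {x : α // rk x = n},
        restr rk n u x * (d * (if x = xh then 1 else 0))
        = if x = xh then restr rk n u x * d else 0 := by
      intro x; split <;> simp
    rw [Finset.sum_congr rfl fun x _ => this x, Fintype.sum_ite_eq' xh]
    show restr rk n u xh * d = d * u (X n)
    show u (X n) * d = d * u (X n)
    ring
  set ψ : ℕ → (α → ℤ) := fun i => (UpF rk)^[i] (dvec (Y (n - i))) with hψdef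
  set β : ℕ → ℤ := fun i => pairN rk n g (ψ i) with hβdef
  have hψeval : ∀ i, i ≤ n → ψ i (X n) = (if X (n-i) = Y (n-i) then (1:ℤ) else 0) := by
    intro i hi
    have hXn : X n = X ((n-i) + i) := by congr 1; omega
    show (UpF rk)^[i] (dvec (Y (n - i))) (X n) = _
    rw [hXn, iter_up_eval rk hgrade X hXpriv (n-i) (dvec (Y (n-i))) i]
    rfl
  have REL : ∀ i, i < n →
      β (i+1) + ((k:ℤ) + i + 1) * β i = d * (if X (n-i) = Y (n-i) then 1 else 0) := by
    intro i hi
    have e2 : DnF rk (dvec (Y (n - i))) = dvec (Y (n - (i+1))) := by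
      have hni : (n - (i+1)) + 1 = n - i := by omega
      have h := dn_dvec_priv rk hgrade _ _ (hYpriv (n - (i+1)))
      rw [hni] at h
      exact h
    have e1 : ∀ t, DnF rk (UpF rk (ψ i)) t = ψ (i+1) t + ((i:ℤ) + 1) * ψ i t := by
      intro t
      have h1 : UpF rk (ψ i) = (UpF rk)^[i+1] (dvec (Y (n - i))) :=
        (Function.iterate_succ_apply' (UpF rk) i _).symm
      rw [h1, G2 rk hbot hgrade hdown hD1 hD2 i (dvec (Y (n-i))) t, e2]
    have hcomb : pairN rk n g (fun t => DnF rk (UpF rk (ψ i)) t + (k:ℤ) * ψ i t)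
        = β (i+1) + ((k:ℤ) + i + 1) * β i := by
      have hfun : (fun t => DnF rk (UpF rk (ψ i)) t + (k:ℤ) * ψ i t)
          = fun t => ψ (i+1) t + (((i:ℤ) + 1) + k) * ψ i t := by
        funext t
        rw [e1 t]
        ring
      rw [hfun, pairN_comb rk n g (ψ (i+1)) (ψ i) (((i:ℤ) + 1) + k)]
      show pairN rk n g (ψ (i+1)) + ((i:ℤ) + 1 + k) * pairN rk n g (ψ i) = _
      ring
    rw [← hcomb, HREL (ψ i), hψeval i (le_of_lt hi)]
  have hrel0 : ∀ i, i + 2 ≤ n → β (i+1) = -(((k:ℤ) + i + 1)) * β i := by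
    intro i hi
    have h := REL i (by omega)
    rw [if_neg (hXYne (n - i) (by omega))] at h
    linarith
  have hprodgen : ∀ i, i ≤ n - 1 →
      β i = (-1)^i * (∏ t ∈ Finset.range i, ((k:ℤ) + t + 1)) * β 0 := by
    intro i
    induction i with
    | zero => intro _; simp
    | succ i ih =>
      intro hi
      rw [hrel0 i (by omega), ih (by omega), Finset.prod_range_succ, pow_succ]
      push_cast
      ring
  have hfin : d = ((k:ℤ) + n + 1) * β (n-1) := by
    have h := REL (n-1) (by omega)
    have hn1 : n - (n-1) = 1 := by omega
    rw [hn1] at h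
    rw [if_pos hXY1] at h
    have hβn : β ((n-1)+1) = β (n-1) := by
      have hsucc : (n-1) + 1 = n := by omega
      rw [hsucc]
      have h0 : ψ n = ψ (n-1) := by
        show (UpF rk)^[n] (dvec (Y (n - n))) = (UpF rk)^[n-1] (dvec (Y (n - (n-1))))
        have hz : n - n = 0 := by omega
        rw [hz, hY0, hn1]
        have hup : UpF rk (dvec (⊥:α)) = dvec (Y 1) := by
          rw [← hXY1]
          refine up_dvec_unique rk hgrade ⊥ (X 1) ?_ (fun t ht => hcovbot t ht)
          have h := hXpriv 0
          rw [hX0] at h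
          exact h.1
        conv_lhs => rw [show n = (n-1) + 1 by omega, Function.iterate_succ_apply, hup]
      show pairN rk n g (ψ n) = pairN rk n g (ψ (n-1))
      rw [h0]
    rw [hβn] at h
    have hc : ((n-1 : ℕ) : ℤ) = (n:ℤ) - 1 := by
      push_cast [Nat.cast_sub hn]
      ring
    rw [hc] at h
    rw [mul_one] at h
    linear_combination -h
  have hgf : ((genFac 1 k (n-1) : ℕ) : ℤ) = ∏ t ∈ Finset.range (n-1), ((k:ℤ) + t + 1) := by
    unfold genFac
    push_cast
    exact Finset.prod_congr rfl fun t _ => by ring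
  refine ⟨(-1)^(n-1) * β 0, ?_⟩
  rw [Nat.cast_mul, hgf, hfin, hprodgen (n-1) le_rfl]
  push_cast
  ring
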